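/- The ratio m ↦ E(m)/K(m) is strictly decreasing on the interval [0, 1); moreover E(0)/K(0) = 1 and E(m)/K(m) tends to 0 as m tends to 1 from the left. -/

import Mathlib

open Real Filter Set
open scoped Topology

/-- Complete elliptic integral of the first kind, `K(m)`. -/
noncomputable def ellK (m : ℝ) : ℝ :=
  ∫ t in (0:ℝ)..(π/2), 1 / Real.sqrt (1 - m * Real.sin t ^ 2)

/-- Complete elliptic integral of the second kind, `E(m)`. -/
noncomputable def ellE (m : ℝ) : ℝ :=
  ∫ t in (0:ℝ)..(π/2), Real.sqrt (1 - m * Real.sin t ^ 2)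

/-- Complete elliptic integral of the third kind, `Π(n, m)`. -/
noncomputable def ellPi (n m : ℝ) : ℝ :=
  ∫ t in (0:ℝ)..(π/2), 1 / ((1 - n * Real.sin t ^ 2) * Real.sqrt (1 - m * Real.sin t ^ 2))

/-- The constant `μ(a,b)`. -/
noncomputable def muC (a b : ℝ) : ℝ :=
  Real.sqrt ((a + b + Real.sqrt (4 + (a - b) ^ 2)) / 2)

/-- The constant `ν(a,b)`. -/
noncomputable def nuC (a b : ℝ) : ℝ :=
  Real.sqrt ((a + b - Real.sqrt (4 + (a - b) ^ 2)) / 2)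

/-- First component `Φ₁` of the period map. -/
noncomputable def Phi1 (a b : ℝ) : ℝ :=
  muC a b * ellPi ((a - b) / (a - muC a b ^ 2)) ((a - b) / a) /
    (π * Real.sqrt a * (a - muC a b ^ 2))

/-- Second component `Φ₂` of the period map. -/
noncomputable def Phi2 (a b : ℝ) : ℝ :=
  nuC a b * ellPi ((a - b) / (a - nuC a b ^ 2)) ((a - b) / a) /
    (π * Real.sqrt a * (a - nuC a b ^ 2))

/-- The parameter domain `Σ = {(a,b) : a > b, ab > 1}`. -/
def SigmaSet : Set (ℝ × ℝ) := {p | p.1 > p.2 ∧ p.1 * p.2 > 1}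

/-- The domain `Ω̃ = {(x,y) : -1/√2 < x < -1/2, x² + y² < 1/2, y > 0}`. -/
def OmegaSet : Set (ℝ × ℝ) :=
  {p | -(1 / Real.sqrt 2) < p.1 ∧ p.1 < -(1/2) ∧ p.1 ^ 2 + p.2 ^ 2 < 1/2 ∧ p.2 > 0}


lemma den_pos {m : ℝ} (hm0 : 0 ≤ m) (hm : m < 1) (t : ℝ) :
    0 < 1 - m * Real.sin t ^ 2 := by
  nlinarith [Real.sin_sq_le_one t, sq_nonneg (Real.sin t)]

lemma contE (m : ℝ) : Continuous fun t : ℝ => Real.sqrt (1 - m * Real.sin t ^ 2) :=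
  (continuous_const.sub (continuous_const.mul (Real.continuous_sin.pow 2))).sqrt

lemma contK {m : ℝ} (hm0 : 0 ≤ m) (hm : m < 1) :
    Continuous fun t : ℝ => 1 / Real.sqrt (1 - m * Real.sin t ^ 2) :=
  continuous_const.div (contE m) fun t => (Real.sqrt_pos.2 (den_pos hm0 hm t)).ne'

lemma ellK_pos {m : ℝ} (hm0 : 0 ≤ m) (hm : m < 1) : 0 < ellK m := by
  apply intervalIntegral.intervalIntegral_pos_of_pos_on
    (((contK hm0 hm)).intervalIntegrable _ _)
  · intro t _
    exact div_pos one_pos (Real.sqrt_pos.2 (den_pos hm0 hm t))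
  · exact pi_div_two_pos

lemma ellE_pos {m : ℝ} (hm0 : 0 ≤ m) (hm : m < 1) : 0 < ellE m := by
  apply intervalIntegral.intervalIntegral_pos_of_pos_on
    ((contE m).intervalIntegrable _ _)
  · intro t _
    exact Real.sqrt_pos.2 (den_pos hm0 hm t)
  · exact pi_div_two_pos

lemma ellE_lt {m₁ m₂ : ℝ} (h0 : 0 ≤ m₁) (h12 : m₁ < m₂) (h2 : m₂ < 1) :
    ellE m₂ < ellE m₁ := by
  have h20 : 0 ≤ m₂ := h0.trans h12.le
  have key := intervalIntegral.intervalIntegral_pos_of_pos_on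
    (f := fun t => Real.sqrt (1 - m₁ * Real.sin t ^ 2) - Real.sqrt (1 - m₂ * Real.sin t ^ 2))
    (a := 0) (b := π/2)
    (((contE m₁).sub (contE m₂)).intervalIntegrable _ _) ?_ pi_div_two_pos
  · rw [intervalIntegral.integral_sub ((contE m₁).intervalIntegrable _ _)
      ((contE m₂).intervalIntegrable _ _)] at key
    unfold ellE; linarith
  · intro t ht
    have hs : 0 < Real.sin t :=
      Real.sin_pos_of_pos_of_lt_pi ht.1 (ht.2.trans (by linarith [Real.pi_pos]))
    have hlt : 1 - m₂ * Real.sin t ^ 2 < 1 - m₁ * Real.sin t ^ 2 := by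
      nlinarith [mul_pos (sub_pos.2 h12) (pow_pos hs 2)]
    have := Real.sqrt_lt_sqrt (den_pos h20 h2 t).le hlt
    linarith

lemma ellK_lt {m₁ m₂ : ℝ} (h0 : 0 ≤ m₁) (h12 : m₁ < m₂) (h2 : m₂ < 1) :
    ellK m₁ < ellK m₂ := by
  have h1 : m₁ < 1 := h12.trans h2
  have h20 : 0 ≤ m₂ := h0.trans h12.le
  have key := intervalIntegral.intervalIntegral_pos_of_pos_on
    (f := fun t => 1 / Real.sqrt (1 - m₂ * Real.sin t ^ 2)
      - 1 / Real.sqrt (1 - m₁ * Real.sin t ^ 2))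
    (a := 0) (b := π/2)
    (((contK h20 h2).sub (contK h0 h1)).intervalIntegrable _ _) ?_ pi_div_two_pos
  · rw [intervalIntegral.integral_sub ((contK h20 h2).intervalIntegrable _ _)
      ((contK h0 h1).intervalIntegrable _ _)] at key
    unfold ellK; linarith
  · intro t ht
    have hs : 0 < Real.sin t :=
      Real.sin_pos_of_pos_of_lt_pi ht.1 (ht.2.trans (by linarith [Real.pi_pos]))
    have hlt : 1 - m₂ * Real.sin t ^ 2 < 1 - m₁ * Real.sin t ^ 2 := by
      nlinarith [mul_pos (sub_pos.2 h12) (pow_pos hs 2)]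
    have hsq := Real.sqrt_lt_sqrt (den_pos h20 h2 t).le hlt
    have := one_div_lt_one_div_of_lt (Real.sqrt_pos.2 (den_pos h20 h2 t)) hsq
    linarith

lemma ellE_le {m : ℝ} (hm0 : 0 ≤ m) (hm : m < 1) : ellE m ≤ π / 2 := by
  have h := intervalIntegral.integral_mono_on (μ := MeasureTheory.volume) (a := 0) (b := π/2) pi_div_two_pos.le
    ((contE m).intervalIntegrable _ _) (continuous_const.intervalIntegrable _ _)
    (fun t _ => Real.sqrt_le_one.2 (by nlinarith [sq_nonneg (Real.sin t)]))
  simpa [ellE] using h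

lemma sqrt_aux {m : ℝ} (hm0 : 0 ≤ m) (hm : m < 1) {t : ℝ} (ht : t ∈ Set.Icc 0 (π/2)) :
    1 - m * Real.sin t ^ 2 ≤ (1 - m) + (t - π/2) ^ 2 := by
  have hc0 : 0 ≤ Real.cos t :=
    Real.cos_nonneg_of_mem_Icc ⟨by linarith [ht.1, Real.pi_pos], ht.2⟩
  have hc1 : Real.cos t ≤ π/2 - t := by
    have := Real.sin_le (x := π/2 - t) (by linarith [ht.2])
    rwa [Real.sin_pi_div_two_sub] at this
  have hpyth := Real.sin_sq_add_cos_sq t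
  nlinarith [mul_le_mul hc1 hc1 hc0 (by linarith [ht.2] : (0:ℝ) ≤ π/2 - t),
    sq_nonneg (Real.cos t)]

lemma K_lower {m : ℝ} (hm0 : 0 ≤ m) (hm : m < 1) :
    Real.arsinh ((π/2) / Real.sqrt (1 - m)) ≤ ellK m := by
  set ε := 1 - m with hεdef
  have hε0 : 0 < ε := by simp [hεdef]; linarith
  have hsε : 0 < Real.sqrt ε := Real.sqrt_pos.2 hε0
  have hcont : Continuous fun t : ℝ => 1 / Real.sqrt (ε + (t - π/2) ^ 2) := by
    apply continuous_const.div
      ((continuous_const.add ((continuous_id.sub continuous_const).pow 2)).sqrt)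
    intro t
    exact (Real.sqrt_pos.2 (add_pos_of_pos_of_nonneg hε0 (sq_nonneg _))).ne'
  have hderiv : ∀ t ∈ Set.uIcc (0:ℝ) (π/2),
      HasDerivAt (fun t => Real.arsinh ((t - π/2) / Real.sqrt ε))
        (1 / Real.sqrt (ε + (t - π/2) ^ 2)) t := by
    intro t _
    have h1 : HasDerivAt (fun t : ℝ => (t - π/2) / Real.sqrt ε) (1 / Real.sqrt ε) t := by
      simpa using ((hasDerivAt_id t).sub_const (π/2)).div_const (Real.sqrt ε)
    have h2 := (Real.hasDerivAt_arsinh ((t - π/2) / Real.sqrt ε)).comp t h1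
    refine h2.congr_deriv ?_
    have hkey : Real.sqrt (1 + ((t - π/2) / Real.sqrt ε) ^ 2)
        = Real.sqrt (ε + (t - π/2) ^ 2) / Real.sqrt ε := by
      rw [eq_div_iff hsε.ne', ← Real.sqrt_mul (by positivity)]
      congr 1
      rw [div_pow, Real.sq_sqrt hε0.le]
      field_simp
    rw [hkey]
    field_simp
  have hint : (∫ t in (0:ℝ)..(π/2), 1 / Real.sqrt (ε + (t - π/2) ^ 2))
      = Real.arsinh ((π/2) / Real.sqrt ε) := by
    rw [intervalIntegral.integral_eq_sub_of_hasDerivAt hderiv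
      (hcont.intervalIntegrable _ _)]
    simp [Real.arsinh_neg, neg_div]
  have hpt : ∀ t ∈ Set.Icc (0:ℝ) (π/2),
      1 / Real.sqrt (ε + (t - π/2) ^ 2) ≤ 1 / Real.sqrt (1 - m * Real.sin t ^ 2) := by
    intro t ht
    have hle := sqrt_aux hm0 hm ht
    have h1 : 0 < Real.sqrt (1 - m * Real.sin t ^ 2) :=
      Real.sqrt_pos.2 (den_pos hm0 hm t)
    exact one_div_le_one_div_of_le h1 (Real.sqrt_le_sqrt hle)
  have hmono := intervalIntegral.integral_mono_on (μ := MeasureTheory.volume) (a := 0) (b := π/2) pi_div_two_pos.le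
    (hcont.intervalIntegrable _ _) ((contK hm0 hm).intervalIntegrable _ _) hpt
  rw [hint] at hmono
  unfold ellK
  exact hmono

lemma log_le_arsinh {x : ℝ} (hx : 0 < x) : Real.log x ≤ Real.arsinh x := by
  rw [Real.arsinh]
  exact Real.log_le_log hx (le_add_of_nonneg_right (Real.sqrt_nonneg _))

lemma K_tendsto : Tendsto ellK (𝓝[<] (1:ℝ)) atTop := by
  have hs : Tendsto (fun m : ℝ => Real.sqrt (1 - m)) (𝓝[<] (1:ℝ)) (𝓝[>] 0) := by
    apply tendsto_nhdsWithin_iff.2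
    constructor
    · have hc : Continuous (fun m : ℝ => Real.sqrt (1 - m)) :=
        (continuous_const.sub continuous_id).sqrt
      have h : Tendsto (fun m : ℝ => Real.sqrt (1 - m)) (𝓝 1) (𝓝 0) := by
        simpa using hc.tendsto 1
      exact h.mono_left nhdsWithin_le_nhds
    · filter_upwards [self_mem_nhdsWithin] with m hm
      exact Real.sqrt_pos.2 (by simp only [mem_Iio] at hm; linarith)
  have hinv : Tendsto (fun m : ℝ => (π/2) * (Real.sqrt (1 - m))⁻¹) (𝓝[<] (1:ℝ)) atTop :=
    Tendsto.const_mul_atTop pi_div_two_pos (tendsto_inv_nhdsGT_zero.comp hs)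
  have hinv' : Tendsto (fun m : ℝ => (π/2) / Real.sqrt (1 - m)) (𝓝[<] (1:ℝ)) atTop := by
    simpa [div_eq_mul_inv] using hinv
  have harsinh : Tendsto (fun m : ℝ => Real.arsinh ((π/2) / Real.sqrt (1 - m)))
      (𝓝[<] (1:ℝ)) atTop := by
    apply tendsto_atTop_mono' _ ?_ (Real.tendsto_log_atTop.comp hinv')
    filter_upwards [hinv'.eventually (eventually_gt_atTop 0)] with m hm
    exact log_le_arsinh hm
  apply tendsto_atTop_mono' _ ?_ harsinh
  filter_upwards [Ioo_mem_nhdsLT_of_mem (by norm_num : (1:ℝ) ∈ Set.Ioc 0 1)] with m hm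
  exact K_lower hm.1.le hm.2


/-- The ratio `m ↦ E(m)/K(m)` is strictly decreasing on `[0, 1)`; moreover
`E(0)/K(0) = 1` and `E(m)/K(m) → 0` as `m → 1⁻`. -/
theorem stmt_3 :
    StrictAntiOn (fun m : ℝ => ellE m / ellK m) (Set.Ico 0 1) ∧
    ellE 0 / ellK 0 = 1 ∧
    Filter.Tendsto (fun m : ℝ => ellE m / ellK m) (nhdsWithin 1 (Set.Iio 1)) (nhds 0) := by
  refine ⟨?_, ?_, ?_⟩
  · intro a ha b hb hab
    dsimp only
    have hE := ellE_lt ha.1 hab hb.2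
    have hK := ellK_lt ha.1 hab hb.2
    have hEb := ellE_pos (ha.1.trans hab.le) hb.2
    have hKa := ellK_pos ha.1 (hab.trans hb.2)
    have hKb := ellK_pos (ha.1.trans hab.le) hb.2
    calc ellE b / ellK b ≤ ellE b / ellK a := by gcongr
      _ < ellE a / ellK a := by gcongr
  · have hE : ellE 0 = π / 2 := by simp [ellE]
    have hK : ellK 0 = π / 2 := by simp [ellK]
    rw [hE, hK, div_self pi_div_two_pos.ne']
  · have h2 : Tendsto (fun m : ℝ => (π/2) / ellK m) (𝓝[<] (1:ℝ)) (𝓝 0) :=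
      tendsto_const_nhds.div_atTop K_tendsto
    apply squeeze_zero' ?_ ?_ h2
    · filter_upwards [Ioo_mem_nhdsLT_of_mem (by norm_num : (1:ℝ) ∈ Set.Ioc 0 1)] with m hm
      exact div_nonneg (ellE_pos hm.1.le hm.2).le (ellK_pos hm.1.le hm.2).le
    · filter_upwards [Ioo_mem_nhdsLT_of_mem (by norm_num : (1:ℝ) ∈ Set.Ioc 0 1)] with m hm
      have hEle := ellE_le hm.1.le hm.2
      have hKp := ellK_pos hm.1.le hm.2
      gcongr
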